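/- Let k ≥ 0 be a natural number and L a set. Suppose R_{-1}, R_0, R_1, …, R_{k-1} are pairwise disjoint finite sets with |R_{-1}| = 1 and |R_i| = 2^(i+1) for 0 ≤ i ≤ k-1; let E_{-1} = L × R_{-1}, and for 0 ≤ i ≤ k-1 let E_i ⊆ L × R_i be an edge relation such that every finite subset S ⊆ L with |S| ≥ 2^i satisfies |E_i(S)| ≥ 2^i. Then the bipartite graph (L, R, E) with R = ⋃_{i=-1}^{k-1} R_i and E = ⋃_{i=-1}^{k-1} E_i admits online matchings up to size 2^k. -/

import Mathlib

/-- The set of neighbors of a set `S` of left vertices in the bipartite graph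
with edge relation `E`. -/
def nbhd {α β : Type*} (E : Set (α × β)) (S : Set α) : Set β :=
  {y | ∃ x ∈ S, (x, y) ∈ E}

/-- A bipartite graph with left vertices `L` and edge relation `E` admits online
matchings up to size `s` if there is a strategy `g`, mapping each finite sequence of
pairwise distinct left vertices to a right vertex, such that for every sequence
`x₁, …, x_m` of pairwise distinct elements of `L` with `m ≤ s`, setting
`y_j = g(x₁, …, x_j)`, every `y_j` is a neighbor of `x_j` and the `y_j` are pairwise
distinct. -/
def AdmitsOnlineMatching {α β : Type*} (L : Set α) (E : Set (α × β)) (s : ℕ) : Prop :=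
  ∃ g : List α → β,
    ∀ xs : List α, xs.Nodup → (∀ x ∈ xs, x ∈ L) → xs.length ≤ s →
      (∀ i : Fin xs.length, (xs.get i, g (xs.take (i + 1))) ∈ E) ∧
      (∀ i j : Fin xs.length, i ≠ j → g (xs.take (i + 1)) ≠ g (xs.take (j + 1)))

namespace Stmt9
open Classical

variable {α β : Type}

def Pfree (k : ℕ) (E : ℕ → Set (α × β)) (prev : List β) (x : α) (i : ℕ) : Prop :=
  i < k ∧ ∃ y, (x, y) ∈ E i ∧ y ∉ prev

noncomputable def step (k : ℕ) (E : ℕ → Set (α × β)) (y₀ : β) (prev : List β) (x : α) : β :=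
  if h : ∃ i, Pfree k E prev x i then
    (Nat.findGreatest_spec (P := Pfree k E prev x) (le_of_lt h.choose_spec.1)
      h.choose_spec : Pfree k E prev x _).2.choose
  else y₀

theorem step_spec (k : ℕ) (E : ℕ → Set (α × β)) (y₀ : β) (prev : List β) (x : α) :
    ((¬ ∃ i, Pfree k E prev x i) ∧ step k E y₀ prev x = y₀) ∨
    (∃ i < k, (x, step k E y₀ prev x) ∈ E i ∧ step k E y₀ prev x ∉ prev ∧
      ∀ i', i < i' → i' < k → ∀ y, (x, y) ∈ E i' → y ∈ prev) := by
  unfold step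
  split_ifs with h
  · right
    have hg : Pfree k E prev x (Nat.findGreatest (Pfree k E prev x) k) :=
      Nat.findGreatest_spec (le_of_lt h.choose_spec.1) h.choose_spec
    refine ⟨Nat.findGreatest (Pfree k E prev x) k, hg.1, hg.2.choose_spec.1,
      hg.2.choose_spec.2, ?_⟩
    intro i' hlt hik y hy
    by_contra hnot
    exact Nat.findGreatest_is_greatest hlt (le_of_lt hik) ⟨hik, y, hy, hnot⟩
  · exact Or.inl ⟨h, rfl⟩

noncomputable def run (k : ℕ) (E : ℕ → Set (α × β)) (y₀ : β) : List α → List β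
  | [] => []
  | x :: t => step k E y₀ (run k E y₀ t) x :: run k E y₀ t

@[simp] theorem run_nil (k : ℕ) (E : ℕ → Set (α × β)) (y₀ : β) : run k E y₀ [] = [] := rfl

@[simp] theorem run_cons (k : ℕ) (E : ℕ → Set (α × β)) (y₀ : β) (x : α) (t : List α) :
    run k E y₀ (x :: t) = step k E y₀ (run k E y₀ t) x :: run k E y₀ t := rfl

@[simp] theorem length_run (k : ℕ) (E : ℕ → Set (α × β)) (y₀ : β) (t : List α) :
    (run k E y₀ t).length = t.length := by
  induction t with
  | nil => rfl
  | cons x t ih => simp [run, ih]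

theorem run_drop (k : ℕ) (E : ℕ → Set (α × β)) (y₀ : β) (t : List α) (j : ℕ) :
    run k E y₀ (t.drop j) = (run k E y₀ t).drop j := by
  induction t generalizing j with
  | nil => simp
  | cons x t ih =>
    cases j with
    | zero => simp
    | succ j => simpa using ih j

theorem run_get (k : ℕ) (E : ℕ → Set (α × β)) (y₀ : β) (t : List α) (j : ℕ)
    (hj : j < t.length) :
    (run k E y₀ t).get ⟨j, by simpa using hj⟩ =
      step k E y₀ (run k E y₀ (t.drop (j + 1))) (t.get ⟨j, hj⟩) := by
  induction t generalizing j with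
  | nil => simp at hj
  | cons x t ih =>
    cases j with
    | zero => simp [run]
    | succ j => simpa using ih j (by simpa using hj)

theorem sum_two_pow (m : ℕ) : 1 + ∑ l ∈ Finset.range m, 2 ^ l = 2 ^ m := by
  induction m with
  | zero => simp
  | succ m ih => rw [Finset.sum_range_succ, ← add_assoc, ih]; ring

section Count

variable (k : ℕ) (Rm1 : Set β) (R : ℕ → Set β) (E : ℕ → Set (α × β)) (y₀ : β)

theorem count
    (hy₀ : y₀ ∈ Rm1)
    (hdisjm1 : ∀ i < k, Disjoint Rm1 (R i))
    (hdisj : ∀ i < k, ∀ j < k, i ≠ j → Disjoint (R i) (R j))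
    (hE : ∀ i < k, ∀ p ∈ E i, p.2 ∈ R i)
    (hdisp : ∀ i < k, ∀ S : Set α, S.Finite → 2 ^ i ≤ S.ncard →
      2 ^ i ≤ (nbhd (E i) S).ncard)
    (t : List α) (hnd : t.Nodup) (hy : y₀ ∈ run k E y₀ t) :
    2 ^ k ≤ t.length := by
  set Y := run k E y₀ t with hY
  set n := t.length with hn
  have hYlen : Y.length = n := by simp [hY, hn]
  set out : ℕ → β := fun j => Y.getD j y₀ with hout
  have hout_get : ∀ j (hj : j < n), out j = Y.get ⟨j, by omega⟩ := by
    intro j hj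
    simp [hout, List.getD_eq_getElem, hYlen.symm ▸ hj]
  -- the key per-index fact
  have fact : ∀ j (hj : j < n),
      (out j = y₀ ∧ ∀ i < k, ∀ y, (t.get ⟨j, hj⟩, y) ∈ E i → y ∈ Y) ∨
      (∃ i < k, (t.get ⟨j, hj⟩, out j) ∈ E i ∧
        ∀ i', i < i' → i' < k → ∀ y, (t.get ⟨j, hj⟩, y) ∈ E i' → y ∈ Y) := by
    intro j hj
    have hg := run_get k E y₀ t j hj
    have hprev : ∀ y, y ∈ run k E y₀ (t.drop (j + 1)) → y ∈ Y := by
      intro y hyy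
      rw [run_drop] at hyy
      exact List.drop_subset _ _ hyy
    have ho : out j = step k E y₀ (run k E y₀ (t.drop (j + 1))) (t.get ⟨j, hj⟩) := by
      rw [hout_get j hj, hg]
    rcases step_spec k E y₀ (run k E y₀ (t.drop (j + 1))) (t.get ⟨j, hj⟩) with
      ⟨hfail, hstep⟩ | ⟨i, hik, hmem, _, hmax⟩
    · left
      refine ⟨ho.trans hstep, ?_⟩
      intro i hik y hxy
      by_contra hnot
      refine hfail ⟨i, hik, y, hxy, ?_⟩
      intro hmem
      exact hnot (hprev y hmem)
    · right
      refine ⟨i, hik, ho ▸ hmem, fun i' h1 h2 y hy' => hprev y (hmax i' h1 h2 y hy')⟩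
  -- finset machinery
  set F : ℕ → Finset ℕ := fun i => (Finset.range n).filter (fun j => out j ∈ R i) with hF
  set Fy : Finset ℕ := (Finset.range n).filter (fun j => out j = y₀) with hFy
  have houtR : ∀ j i, i < k → j ∈ F i → out j ∈ R i := by
    intro j i _ hj; exact (Finset.mem_filter.mp hj).2
  have hFsub : ∀ i, F i ⊆ Finset.range n := fun i => Finset.filter_subset _ _
  have hFysub : Fy ⊆ Finset.range n := Finset.filter_subset _ _
  have hy₀notR : ∀ i < k, y₀ ∉ R i := by
    intro i hik hmem
    exact (hdisjm1 i hik).ne_of_mem hy₀ hmem rfl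
  have hdisjF : ∀ i < k, Disjoint Fy (F i) := by
    intro i hik
    rw [Finset.disjoint_left]
    intro j hjy hjF
    have h1 := (Finset.mem_filter.mp hjy).2
    have h2 := (Finset.mem_filter.mp hjF).2
    exact hy₀notR i hik (h1 ▸ h2)
  have hdisjFF : ∀ i < k, ∀ i' < k, i ≠ i' → Disjoint (F i) (F i') := by
    intro i hik i' hik' hne
    rw [Finset.disjoint_left]
    intro j hj hj'
    exact (hdisj i hik i' hik' hne).ne_of_mem (Finset.mem_filter.mp hj).2
      (Finset.mem_filter.mp hj').2 rfl
  have hcardD : ∀ i ≤ k, (Fy ∪ (Finset.range i).biUnion F).card =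
      Fy.card + ∑ l ∈ Finset.range i, (F l).card := by
    intro i hik
    rw [Finset.card_union_of_disjoint, Finset.card_biUnion]
    · intro a ha b hb hab
      exact hdisjFF a (lt_of_lt_of_le (Finset.mem_range.mp ha) hik)
        b (lt_of_lt_of_le (Finset.mem_range.mp hb) hik) hab
    · rw [Finset.disjoint_biUnion_right]
      intro l hl
      exact hdisjF l (lt_of_lt_of_le (Finset.mem_range.mp hl) hik)
  have hfy : 1 ≤ Fy.card := by
    rcases List.mem_iff_get.mp hy with ⟨⟨j, hj⟩, hget⟩
    have hjn : j < n := by omega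
    have : j ∈ Fy := Finset.mem_filter.mpr ⟨Finset.mem_range.mpr hjn,
      by rw [hout_get j hjn]; exact hget⟩
    exact Finset.card_pos.mpr ⟨j, this⟩
  have hn0 : 0 < n := by
    rcases Finset.card_pos.mp hfy with ⟨j, hj⟩
    exact lt_of_le_of_lt (Nat.zero_le j) (Finset.mem_range.mp (hFysub hj))
  set a : α := t.get ⟨0, hn0⟩ with ha
  have hgetD : ∀ j (hj : j < n), t.getD j a = t.get ⟨j, hj⟩ := by
    intro j hj; simp [List.getD_eq_getElem, hj, show j < t.length from hj]
  -- main claim: 2^i ≤ (F i).card for i < k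
  have claimA : ∀ i, i < k → 2 ^ i ≤ (F i).card := by
    intro i
    induction i using Nat.strong_induction_on with
    | _ i IH =>
    intro hik
    set D : Finset ℕ := Fy ∪ (Finset.range i).biUnion F with hD
    have hDsub : D ⊆ Finset.range n := by
      rw [hD]
      refine Finset.union_subset hFysub ?_
      exact Finset.biUnion_subset.mpr (fun l _ => hFsub l)
    have hDcard : 2 ^ i ≤ D.card := by
      rw [hD, hcardD i (le_of_lt hik)]
      calc 2 ^ i = 1 + ∑ l ∈ Finset.range i, 2 ^ l := (sum_two_pow i).symm
        _ ≤ Fy.card + ∑ l ∈ Finset.range i, (F l).card := by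
            refine Nat.add_le_add hfy (Finset.sum_le_sum ?_)
            intro l hl
            exact IH l (Finset.mem_range.mp hl) (lt_trans (Finset.mem_range.mp hl) hik)
    set S₀ : Finset α := D.image (fun j => t.getD j a) with hS₀
    have hinj : Set.InjOn (fun j => t.getD j a) ↑D := by
      intro j1 h1 j2 h2 heq
      dsimp only at heq
      have hj1 : j1 < n := Finset.mem_range.mp (hDsub h1)
      have hj2 : j2 < n := Finset.mem_range.mp (hDsub h2)
      rw [hgetD j1 hj1, hgetD j2 hj2] at heq
      have := (List.Nodup.get_inj_iff hnd).mp heq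
      exact congrArg Fin.val this
    have hS₀card : S₀.card = D.card := Finset.card_image_of_injOn hinj
    have hnb : nbhd (E i) ↑S₀ ⊆ {y | y ∈ Y} ∩ R i := by
      rintro y ⟨z, hz, hzy⟩
      have hyRi : y ∈ R i := hE i hik (z, y) hzy
      refine ⟨?_, hyRi⟩
      rcases Finset.mem_image.mp hz with ⟨j, hjD, hjz⟩
      have hjn : j < n := Finset.mem_range.mp (hDsub hjD)
      have hz' : z = t.get ⟨j, hjn⟩ := by rw [← hjz, hgetD j hjn]
      rw [hD, Finset.mem_union] at hjD
      rcases fact j hjn with ⟨_, hall⟩ | ⟨i₀, hi₀k, hmem, hmax⟩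
      · exact hall i hik y (hz' ▸ hzy)
      · -- find the level of j
        have houtj : out j ∈ R i₀ := hE i₀ hi₀k _ hmem
        rcases hjD with hjy | hjl
        · -- out j = y₀ contradicts out j ∈ R i₀
          exact absurd ((Finset.mem_filter.mp hjy).2 ▸ houtj) (hy₀notR i₀ hi₀k)
        · rcases Finset.mem_biUnion.mp hjl with ⟨l, hl, hjF⟩
          have hli : l < i := Finset.mem_range.mp hl
          have hlk : l < k := lt_trans hli hik
          have houtl : out j ∈ R l := (Finset.mem_filter.mp hjF).2
          have hil : i₀ = l := by
            by_contra hne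
            exact (hdisj i₀ hi₀k l hlk hne).ne_of_mem houtj houtl rfl
          exact hmax i (hil ▸ hli) hik y (hz' ▸ hzy)
    have hTfin : ({y | y ∈ Y} ∩ R i).Finite :=
      Set.Finite.inter_of_left (List.finite_toSet Y) _
    have hTcard : ({y | y ∈ Y} ∩ R i).ncard ≤ (F i).card := by
      have hsub : {y | y ∈ Y} ∩ R i ⊆ ↑((F i).image out) := by
        rintro y ⟨hyY, hyR⟩
        rcases List.mem_iff_get.mp hyY with ⟨⟨j, hj⟩, hget⟩
        have hjn : j < n := by omega
        refine Finset.mem_coe.mpr (Finset.mem_image.mpr ⟨j, ?_, ?_⟩)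
        · exact Finset.mem_filter.mpr ⟨Finset.mem_range.mpr hjn,
            by rw [hout_get j hjn]; exact hget ▸ hyR⟩
        · rw [hout_get j hjn]; exact hget
      calc ({y | y ∈ Y} ∩ R i).ncard ≤ (↑((F i).image out) : Set β).ncard :=
            Set.ncard_le_ncard hsub (Finset.finite_toSet _)
        _ = ((F i).image out).card := Set.ncard_coe_finset _
        _ ≤ (F i).card := Finset.card_image_le
    have hrun := hdisp i hik ↑S₀ (Finset.finite_toSet S₀)
      (by rw [Set.ncard_coe_finset, hS₀card]; exact hDcard)
    calc 2 ^ i ≤ (nbhd (E i) ↑S₀).ncard := hrun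
      _ ≤ ({y | y ∈ Y} ∩ R i).ncard := Set.ncard_le_ncard hnb hTfin
      _ ≤ (F i).card := hTcard
  -- final count
  have hfinal : 2 ^ k ≤ (Fy ∪ (Finset.range k).biUnion F).card := by
    rw [hcardD k le_rfl]
    calc 2 ^ k = 1 + ∑ l ∈ Finset.range k, 2 ^ l := (sum_two_pow k).symm
      _ ≤ Fy.card + ∑ l ∈ Finset.range k, (F l).card := by
          refine Nat.add_le_add hfy (Finset.sum_le_sum ?_)
          intro l hl
          exact claimA l (Finset.mem_range.mp hl)
  calc 2 ^ k ≤ (Fy ∪ (Finset.range k).biUnion F).card := hfinal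
    _ ≤ (Finset.range n).card := Finset.card_le_card
        (Finset.union_subset hFysub (Finset.biUnion_subset.mpr (fun l _ => hFsub l)))
    _ = n := Finset.card_range n


theorem master
    (hy₀ : y₀ ∈ Rm1)
    (hdisjm1 : ∀ i < k, Disjoint Rm1 (R i))
    (hdisj : ∀ i < k, ∀ j < k, i ≠ j → Disjoint (R i) (R j))
    (hE : ∀ i < k, ∀ p ∈ E i, p.2 ∈ R i)
    (hdisp : ∀ i < k, ∀ S : Set α, S.Finite → 2 ^ i ≤ S.ncard →
      2 ^ i ≤ (nbhd (E i) S).ncard)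
    (l : List α) (hnd : l.Nodup) (hlen : l.length ≤ 2 ^ k) :
    (run k E y₀ l).Nodup ∧ ∀ j (hj : j < l.length),
      (l.get ⟨j, hj⟩, (run k E y₀ l).get ⟨j, by simpa using hj⟩) ∈
        ((Set.univ : Set α) ×ˢ Rm1 ∪ ⋃ i ∈ Set.Iio k, E i) := by
  induction l with
  | nil => exact ⟨List.nodup_nil, fun j hj => by simp at hj⟩
  | cons x t ih =>
    have hxt : x ∉ t := (List.nodup_cons.mp hnd).1
    have hndt : t.Nodup := (List.nodup_cons.mp hnd).2
    have hlent : t.length ≤ 2 ^ k := le_trans (Nat.le_succ _) (by simpa using hlen)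
    obtain ⟨ihnd, ihedge⟩ := ih hndt hlent
    have hnotin : step k E y₀ (run k E y₀ t) x ∉ run k E y₀ t ∧
        (x, step k E y₀ (run k E y₀ t) x) ∈
          ((Set.univ : Set α) ×ˢ Rm1 ∪ ⋃ i ∈ Set.Iio k, E i) := by
      rcases step_spec k E y₀ (run k E y₀ t) x with ⟨hfail, hstep⟩ |
        ⟨i, hik, hmem, hnot, _⟩
      · constructor
        · rw [hstep]
          intro hyin
          have := count k Rm1 R E y₀ hy₀ hdisjm1 hdisj hE hdisp t hndt hyin
          have : t.length < 2 ^ k := by simpa using hlen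
          omega
        · rw [hstep]
          exact Or.inl ⟨Set.mem_univ x, hy₀⟩
      · exact ⟨hnot, Or.inr (Set.mem_iUnion₂.mpr ⟨i, hik, hmem⟩)⟩
    constructor
    · rw [run_cons]
      exact List.nodup_cons.mpr ⟨hnotin.1, ihnd⟩
    · intro j hj
      cases j with
      | zero => simpa using hnotin.2
      | succ j => simpa using ihedge j (by simpa using hj)

theorem final
    (hy₀ : y₀ ∈ Rm1)
    (hdisjm1 : ∀ i < k, Disjoint Rm1 (R i))
    (hdisj : ∀ i < k, ∀ j < k, i ≠ j → Disjoint (R i) (R j))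
    (hE : ∀ i < k, ∀ p ∈ E i, p.2 ∈ R i)
    (hdisp : ∀ i < k, ∀ S : Set α, S.Finite → 2 ^ i ≤ S.ncard →
      2 ^ i ≤ (nbhd (E i) S).ncard) :
    ∃ g : List α → β,
      ∀ xs : List α, xs.Nodup → (∀ x ∈ xs, x ∈ (Set.univ : Set α)) →
        xs.length ≤ 2 ^ k →
        (∀ i : Fin xs.length, (xs.get i, g (xs.take (i + 1))) ∈
          ((Set.univ : Set α) ×ˢ Rm1 ∪ ⋃ i ∈ Set.Iio k, E i)) ∧
        (∀ i j : Fin xs.length, i ≠ j →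
          g (xs.take (i + 1)) ≠ g (xs.take (j + 1))) := by
  refine ⟨fun l => (run k E y₀ l.reverse).headD y₀, ?_⟩
  intro xs hnd _ hlen
  set n := xs.length with hn
  set r := xs.reverse with hr
  set Y := run k E y₀ r with hY
  have hrlen : r.length = n := by simp [hr, hn]
  have hYlen : Y.length = n := by simp [hY, hrlen]
  obtain ⟨hYnd, hedge⟩ := master k Rm1 R E y₀ hy₀ hdisjm1 hdisj hE hdisp r
    (by simpa [hr] using hnd) (by rw [hrlen]; exact hlen)
  have hedge' : ∀ j (hj : j < n),
      (r[j]'(by omega), Y[j]'(by omega)) ∈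
        ((Set.univ : Set α) ×ˢ Rm1 ∪ ⋃ i ∈ Set.Iio k, E i) := by
    intro j hj
    have := hedge j (by omega)
    simpa [List.get_eq_getElem, ← hY] using this
  have key : ∀ m (hm : m < n),
      (run k E y₀ (xs.take (m + 1)).reverse).headD y₀ =
        Y[n - 1 - m]'(by omega) := by
    intro m hm
    have hidx : n - 1 - m = xs.length - (m + 1) := by omega
    have h1 : (xs.take (m + 1)).reverse = r.drop (n - 1 - m) := by
      rw [hidx, hr, ← List.reverse_take]
    have hd : n - 1 - m < Y.length := by omega
    rw [h1, run_drop, ← hY, List.drop_eq_getElem_cons hd]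
    simp only [List.headD_cons]
  have hrx : ∀ m (hm : m < n), r[n - 1 - m]'(by omega) = xs[m]'(by omega) := by
    intro m hm
    have : r[n - 1 - m]'(by omega) = xs[xs.length - 1 - (n - 1 - m)]'(by omega) := by
      simp only [hr]
      exact List.getElem_reverse (by simpa [hn] using (by omega : n - 1 - m < n))
    rw [this]
    congr 1
    omega
  constructor
  · intro i
    have hi : (i : ℕ) < n := i.isLt
    dsimp only
    rw [key i hi]
    have h2 := hedge' (n - 1 - i) (by omega)
    rw [hrx i hi] at h2
    simpa [List.get_eq_getElem] using h2
  · intro i j hij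
    have hi : (i : ℕ) < n := i.isLt
    have hj : (j : ℕ) < n := j.isLt
    dsimp only
    rw [key i hi, key j hj]
    intro heq
    have hYnd' : Y.Nodup := by rw [hY]; exact hYnd
    have := (List.Nodup.getElem_inj_iff hYnd').mp heq
    exact hij (Fin.ext (by omega))

end Count
end Stmt9

/-- multi-level greedy matching: given pairwise disjoint finite sets
`R₋₁, R 0, …, R (k-1)` with `|R₋₁| = 1` and `|R i| = 2^(i+1)`, the relation
`E₋₁ = L × R₋₁`, and relations `E i ⊆ L × R i` such that every finite `S ⊆ L`
with `|S| ≥ 2^i` has `|Eᵢ(S)| ≥ 2^i`, the union graph admits online matchings up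
to size `2^k`. -/


theorem stmt_9 {α β : Type} (k : ℕ)
    (Rm1 : Set β) (R : ℕ → Set β)
    (hRm1 : Rm1.ncard = 1)
    (hRfin : ∀ i < k, (R i).Finite)
    (hRcard : ∀ i < k, (R i).ncard = 2 ^ (i + 1))
    (hdisjm1 : ∀ i < k, Disjoint Rm1 (R i))
    (hdisj : ∀ i < k, ∀ j < k, i ≠ j → Disjoint (R i) (R j))
    (E : ℕ → Set (α × β))
    (hE : ∀ i < k, ∀ p ∈ E i, p.2 ∈ R i)
    (hdisp : ∀ i < k, ∀ S : Set α, S.Finite → 2 ^ i ≤ S.ncard →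
      2 ^ i ≤ (nbhd (E i) S).ncard) :
    AdmitsOnlineMatching (Set.univ : Set α)
      ((Set.univ : Set α) ×ˢ Rm1 ∪ ⋃ i ∈ Set.Iio k, E i) (2 ^ k) := by
  obtain ⟨y₀, hy⟩ := Set.ncard_eq_one.mp hRm1
  have hy₀ : y₀ ∈ Rm1 := by rw [hy]; exact Set.mem_singleton y₀
  exact Stmt9.final k Rm1 R E y₀ hy₀ hdisjm1 hdisj hE hdisp
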